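/- Let p be a prime, let G be a group, and let G = G₁ ≥ G₂ ≥ ⋯ be a central p-filtration of G. Let n ≥ 1 and suppose that p > 2 or [G_n, G_n] ≤ G_{n+2}. Then for every m ≥ 1 the map x ↦ x^(p^m)·G_{n+m+1} from G_n to G_{n+m}/G_{n+m+1} is a group homomorphism whose kernel contains G_{n+1}; concretely: (i) x^(p^m) ∈ G_{n+m} for all x ∈ G_n; (ii) (x^(p^m) · y^(p^m))⁻¹ · (xy)^(p^m) ∈ G_{n+m+1} for all x, y ∈ G_n; and (iii) x^(p^m) ∈ G_{n+m+1} for all x ∈ G_{n+1}. -/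

import Mathlib

/-- The subgroup generated by the `e`-th powers of the elements of `K`. -/
def subgroupPPow {G : Type*} [Group G] (K : Subgroup G) (e : ℕ) : Subgroup G :=
  Subgroup.closure ((fun x => x ^ e) '' (K : Set G))

/-- `Gs` (with `Gs n` interpreted as `G_n` for `n ≥ 1`) is a central `p`-filtration
of `G`: `G₁ = G`, the sequence is descending, and `[G, G_n]·(G_n)ᵖ ≤ G_{n+1}`. -/
def IsCentralPFiltration (p : ℕ) {G : Type*} [Group G] (Gs : ℕ → Subgroup G) : Prop :=
  Gs 1 = ⊤ ∧ (∀ n, 1 ≤ n → Gs (n + 1) ≤ Gs n) ∧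
    ∀ n, 1 ≤ n → ⁅(⊤ : Subgroup G), Gs n⁆ ⊔ subgroupPPow (Gs n) p ≤ Gs (n + 1)

open scoped commutatorElement

section PureGroup

variable {H : Type*} [Group H]

/-- If `z = ⁅b,a⁆` commutes with everything, then `b^j * a = a * b^j * z^j`. -/
private lemma central_swap_pow (a b : H) (hz : ∀ g : H, Commute ⁅b, a⁆ g) (j : ℕ) :
    b ^ j * a = a * b ^ j * ⁅b, a⁆ ^ j := by
  induction j with
  | zero => simp
  | succ j ih =>
    have h1 : b * a = a * b * ⁅b, a⁆ := by
      calc b * a = ⁅b, a⁆ * (a * b) := by group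
        _ = (a * b) * ⁅b, a⁆ := (hz (a * b)).eq
    calc b ^ (j + 1) * a = b ^ j * (b * a) := by rw [pow_succ, mul_assoc]
      _ = b ^ j * (a * b * ⁅b, a⁆) := by rw [h1]
      _ = (b ^ j * a) * b * ⁅b, a⁆ := by simp [mul_assoc]
      _ = a * b ^ j * ⁅b, a⁆ ^ j * b * ⁅b, a⁆ := by rw [ih]
      _ = a * b ^ j * (⁅b, a⁆ ^ j * b) * ⁅b, a⁆ := by simp [mul_assoc]
      _ = a * b ^ j * (b * ⁅b, a⁆ ^ j) * ⁅b, a⁆ := by rw [((hz b).pow_left j).eq]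
      _ = a * b ^ (j + 1) * ⁅b, a⁆ ^ (j + 1) := by rw [pow_succ, pow_succ]; simp [mul_assoc]

/-- Class-2 power formula, stated with a fully central commutator. -/
private lemma central_mul_pow (a b : H) (hz : ∀ g : H, Commute ⁅b, a⁆ g) (k : ℕ) :
    (a * b) ^ k = a ^ k * b ^ k * ⁅b, a⁆ ^ (k.choose 2) := by
  induction k with
  | zero => simp
  | succ k ih =>
    have hch : (k + 1).choose 2 = k.choose 2 + k := by
      rw [Nat.choose_succ_succ, Nat.choose_one_right, Nat.add_comm]
    calc (a * b) ^ (k + 1) = (a * b) ^ k * (a * b) := pow_succ _ _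
      _ = a ^ k * b ^ k * ⁅b, a⁆ ^ (k.choose 2) * (a * b) := by rw [ih]
      _ = a ^ k * ((b ^ k * ⁅b, a⁆ ^ (k.choose 2)) * a) * b := by simp [mul_assoc]
      _ = a ^ k * ((⁅b, a⁆ ^ (k.choose 2) * b ^ k) * a) * b := by
            rw [((hz (b ^ k)).pow_left (k.choose 2)).eq]
      _ = a ^ k * (⁅b, a⁆ ^ (k.choose 2) * (b ^ k * a)) * b := by simp [mul_assoc]
      _ = a ^ k * (⁅b, a⁆ ^ (k.choose 2) * (a * b ^ k * ⁅b, a⁆ ^ k)) * b := by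
            rw [central_swap_pow a b hz k]
      _ = a ^ k * ((a * b ^ k * ⁅b, a⁆ ^ k) * ⁅b, a⁆ ^ (k.choose 2)) * b := by
            rw [((hz _).pow_left (k.choose 2)).eq]
      _ = a ^ (k + 1) * b ^ k * (⁅b, a⁆ ^ k * ⁅b, a⁆ ^ (k.choose 2) * b) := by
            rw [pow_succ]; simp [mul_assoc]
      _ = a ^ (k + 1) * b ^ k * (b * ⁅b, a⁆ ^ (k + k.choose 2)) := by
            rw [← pow_add, ((hz b).pow_left (k + k.choose 2)).eq]
      _ = a ^ (k + 1) * b ^ (k + 1) * ⁅b, a⁆ ^ ((k + 1).choose 2) := by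
            rw [hch, Nat.add_comm (k.choose 2) k, pow_succ b]; simp [mul_assoc]

private lemma comm_mul_right' (a b c : H) : ⁅a, b * c⁆ = ⁅a, b⁆ * (b * ⁅a, c⁆ * b⁻¹) := by
  group

private lemma comm_mul_left' (a c d : H) : ⁅a * c, d⁆ = a * ⁅c, d⁆ * a⁻¹ * ⁅a, d⁆ := by
  group

/-- With a fully central commutator, `⁅a^s, b^t⁆ = ⁅a,b⁆^(s*t)`. -/
private lemma central_comm_pow (a b : H) (hz : ∀ g : H, Commute ⁅a, b⁆ g) (s t : ℕ) :
    ⁅a ^ s, b ^ t⁆ = ⁅a, b⁆ ^ (s * t) := by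
  have h1 : ∀ t : ℕ, ⁅a, b ^ t⁆ = ⁅a, b⁆ ^ t := by
    intro t
    induction t with
    | zero => simp
    | succ t ih =>
      calc ⁅a, b ^ (t + 1)⁆ = ⁅a, b * b ^ t⁆ := by rw [pow_succ']
        _ = ⁅a, b⁆ * (b * ⁅a, b ^ t⁆ * b⁻¹) := comm_mul_right' _ _ _
        _ = ⁅a, b⁆ * (b * ⁅a, b⁆ ^ t * b⁻¹) := by rw [ih]
        _ = ⁅a, b⁆ * (⁅a, b⁆ ^ t * b * b⁻¹) := by rw [((hz b).pow_left t).symm.eq]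
        _ = ⁅a, b⁆ ^ (t + 1) := by rw [pow_succ']; simp [mul_assoc]
  induction s with
  | zero => simp
  | succ s ih =>
    calc ⁅a ^ (s + 1), b ^ t⁆ = ⁅a * a ^ s, b ^ t⁆ := by rw [pow_succ']
      _ = a * ⁅a ^ s, b ^ t⁆ * a⁻¹ * ⁅a, b ^ t⁆ := comm_mul_left' _ _ _
      _ = a * ⁅a, b⁆ ^ (s * t) * a⁻¹ * ⁅a, b⁆ ^ t := by rw [ih, h1]
      _ = ⁅a, b⁆ ^ (s * t) * a * a⁻¹ * ⁅a, b⁆ ^ t := by rw [((hz a).pow_left (s * t)).symm.eq]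
      _ = ⁅a, b⁆ ^ ((s + 1) * t) := by
            rw [Nat.succ_mul, pow_add]; simp [mul_assoc]

end PureGroup

section Filtration

variable {G : Type*} [Group G] {p : ℕ} {Gs : ℕ → Subgroup G}

private lemma cpf_pow_mem (hGs : IsCentralPFiltration p Gs) {k : ℕ} (hk : 1 ≤ k)
    {x : G} (hx : x ∈ Gs k) : x ^ p ∈ Gs (k + 1) :=
  hGs.2.2 k hk (Subgroup.mem_sup_right (Subgroup.subset_closure ⟨x, hx, rfl⟩))

private lemma cpf_ppow_mem (hGs : IsCentralPFiltration p Gs) {k : ℕ} (hk : 1 ≤ k)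
    {x : G} (hx : x ∈ Gs k) (j : ℕ) : x ^ p ^ j ∈ Gs (k + j) := by
  induction j with
  | zero => simpa using hx
  | succ j ih =>
    rw [pow_succ, pow_mul]
    exact cpf_pow_mem hGs (k := k + j) (by omega) ih

private lemma cpf_comm_mem (hGs : IsCentralPFiltration p Gs) {k : ℕ} (hk : 1 ≤ k)
    (g : G) {h : G} (hh : h ∈ Gs k) : ⁅g, h⁆ ∈ Gs (k + 1) :=
  hGs.2.2 k hk (Subgroup.mem_sup_left
    (Subgroup.commutator_mem_commutator (Subgroup.mem_top g) hh))

private lemma cpf_comm_mem' (hGs : IsCentralPFiltration p Gs) {k : ℕ} (hk : 1 ≤ k)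
    {h : G} (hh : h ∈ Gs k) (g : G) : ⁅h, g⁆ ∈ Gs (k + 1) := by
  have := (Gs (k + 1)).inv_mem (cpf_comm_mem hGs hk g hh)
  rwa [commutatorElement_inv] at this

private lemma cpf_normal (hGs : IsCentralPFiltration p Gs) {k : ℕ} (hk : 1 ≤ k) :
    (Gs k).Normal := by
  constructor
  intro h hh g
  have h1 : ⁅g, h⁆ ∈ Gs k := hGs.2.1 k hk (cpf_comm_mem hGs hk g hh)
  have h2 : g * h * g⁻¹ = ⁅g, h⁆ * h := by group
  rw [h2]
  exact (Gs k).mul_mem h1 hh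

private lemma cpf_central (hGs : IsCentralPFiltration p Gs) {k : ℕ} (hk : 1 ≤ k)
    {c : G} (hc : c ∈ Gs k) [(Gs (k + 1)).Normal] (q : G ⧸ Gs (k + 1)) :
    Commute (QuotientGroup.mk c) q := by
  induction q using QuotientGroup.induction_on with
  | _ g =>
    show (QuotientGroup.mk c : G ⧸ Gs (k + 1)) * QuotientGroup.mk g = _
    rw [← QuotientGroup.mk_mul, ← QuotientGroup.mk_mul]
    rw [QuotientGroup.eq]
    have : (c * g)⁻¹ * (g * c) = ⁅g⁻¹, c⁻¹⁆ := by group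
    rw [this]
    exact cpf_comm_mem hGs hk g⁻¹ ((Gs k).inv_mem hc)

/-- Key step: multiplicativity of the `p`-th power map one level up. -/
private lemma cpf_step (hp : p.Prime) (hGs : IsCentralPFiltration p Gs) {k : ℕ}
    (hk : 1 ≤ k) {a b : G} (ha : a ∈ Gs k) (_hb : b ∈ Gs k)
    (hz : 2 < p ∨ ⁅b, a⁆ ∈ Gs (k + 2)) :
    (a ^ p * b ^ p)⁻¹ * (a * b) ^ p ∈ Gs (k + 2) := by
  haveI : (Gs (k + 2)).Normal := cpf_normal hGs (by omega)
  rw [← QuotientGroup.eq]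
  have hzmem : ⁅b, a⁆ ∈ Gs (k + 1) := cpf_comm_mem hGs hk b ha
  have hcen : ∀ q : G ⧸ Gs (k + 2), Commute (QuotientGroup.mk ⁅b, a⁆) q := fun q =>
    cpf_central hGs (k := k + 1) (by omega) hzmem q
  have hcomm : ⁅(QuotientGroup.mk b : G ⧸ Gs (k + 2)), (QuotientGroup.mk a : G ⧸ Gs (k + 2))⁆
      = QuotientGroup.mk ⁅b, a⁆ := by
    simp [commutatorElement_def, QuotientGroup.mk_mul, QuotientGroup.mk_inv]
  have hZp : (QuotientGroup.mk ⁅b, a⁆ : G ⧸ Gs (k + 2)) ^ p = 1 := by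
    rw [← QuotientGroup.mk_pow]
    exact (QuotientGroup.eq_one_iff _).mpr (cpf_pow_mem hGs (by omega) hzmem)
  have hZc : (QuotientGroup.mk ⁅b, a⁆ : G ⧸ Gs (k + 2)) ^ p.choose 2 = 1 := by
    rcases hz with hp2 | hmem
    · obtain ⟨w, hw⟩ : p ∣ p.choose 2 := by
        obtain ⟨t, ht⟩ := hp.odd_of_ne_two (by omega)
        have h1 : p - 1 = 2 * t := by omega
        have h2 : p * (2 * t) = p * t * 2 := by ring
        rw [Nat.choose_two_right, h1, h2, Nat.mul_div_cancel _ (by norm_num)]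
        exact ⟨t, rfl⟩
      rw [hw, pow_mul, hZp, one_pow]
    · rw [(QuotientGroup.eq_one_iff _).mpr hmem, one_pow]
  have hmain := central_mul_pow (QuotientGroup.mk a : G ⧸ Gs (k + 2))
    (QuotientGroup.mk b) (by rw [hcomm]; exact hcen) p
  rw [hcomm, hZc, mul_one] at hmain
  rw [QuotientGroup.mk_mul, QuotientGroup.mk_pow, QuotientGroup.mk_pow,
    QuotientGroup.mk_pow, QuotientGroup.mk_mul, hmain]

/-- Commutators of `p`-th powers drop one extra level. -/
private lemma cpf_comm_pow_mem (hGs : IsCentralPFiltration p Gs) {k : ℕ} (hk : 1 ≤ k)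
    {u v : G} (_hu : u ∈ Gs k) (_hv : v ∈ Gs k) (huv : ⁅u, v⁆ ∈ Gs (k + 2)) :
    ⁅u ^ p, v ^ p⁆ ∈ Gs (k + 3) := by
  haveI : (Gs (k + 3)).Normal := cpf_normal hGs (by omega)
  have hcen : ∀ q : G ⧸ Gs (k + 3), Commute (QuotientGroup.mk ⁅u, v⁆) q := fun q =>
    cpf_central hGs (k := k + 2) (by omega) huv q
  have hcomm : ⁅(QuotientGroup.mk u : G ⧸ Gs (k + 3)), (QuotientGroup.mk v : G ⧸ Gs (k + 3))⁆
      = QuotientGroup.mk ⁅u, v⁆ := by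
    simp [commutatorElement_def, QuotientGroup.mk_mul, QuotientGroup.mk_inv]
  have hZp : (QuotientGroup.mk ⁅u, v⁆ : G ⧸ Gs (k + 3)) ^ p = 1 := by
    rw [← QuotientGroup.mk_pow]
    exact (QuotientGroup.eq_one_iff _).mpr (cpf_pow_mem hGs (by omega) huv)
  have hmain := central_comm_pow (QuotientGroup.mk u : G ⧸ Gs (k + 3))
    (QuotientGroup.mk v) (by rw [hcomm]; exact hcen) p p
  rw [hcomm, pow_mul, hZp, one_pow] at hmain
  have : (QuotientGroup.mk ⁅u ^ p, v ^ p⁆ : G ⧸ Gs (k + 3)) = 1 := by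
    rw [← hmain]
    simp [commutatorElement_def, QuotientGroup.mk_mul, QuotientGroup.mk_inv,
      QuotientGroup.mk_pow]
  exact (QuotientGroup.eq_one_iff _).mp this

end Filtration

/-- Let `{G_n}` be a central `p`-filtration of `G`, `n ≥ 1`, and suppose `p > 2` or
`[G_n, G_n] ≤ G_{n+2}`. Then for every `m ≥ 1` the map `x ↦ x^(p^m)·G_{n+m+1}` from
`G_n` to `G_{n+m}/G_{n+m+1}` is a homomorphism with kernel containing `G_{n+1}`:
(i) `p^m`-th powers of elements of `G_n` lie in `G_{n+m}`; (ii) the map is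
multiplicative modulo `G_{n+m+1}`; (iii) `p^m`-th powers of elements of `G_{n+1}`
lie in `G_{n+m+1}`. -/
theorem centralPFiltration_pow_hom {G : Type*} [Group G] (p : ℕ) (hp : p.Prime)
    (Gs : ℕ → Subgroup G) (hGs : IsCentralPFiltration p Gs) (n : ℕ) (hn : 1 ≤ n)
    (hcase : 2 < p ∨ ⁅Gs n, Gs n⁆ ≤ Gs (n + 2)) (m : ℕ) (hm : 1 ≤ m) :
    (∀ x ∈ Gs n, x ^ p ^ m ∈ Gs (n + m)) ∧
    (∀ x ∈ Gs n, ∀ y ∈ Gs n,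
      (x ^ p ^ m * y ^ p ^ m)⁻¹ * (x * y) ^ p ^ m ∈ Gs (n + m + 1)) ∧
    (∀ x ∈ Gs (n + 1), x ^ p ^ m ∈ Gs (n + m + 1)) := by
  have hzcase : ∀ m : ℕ, ∀ x ∈ Gs n, ∀ y ∈ Gs n,
      2 < p ∨ ⁅y ^ p ^ m, x ^ p ^ m⁆ ∈ Gs (n + m + 2) := by
    rcases hcase with hp2 | hcomm
    · exact fun _ _ _ _ _ => Or.inl hp2
    · have key : ∀ m : ℕ, ∀ x ∈ Gs n, ∀ y ∈ Gs n,
          ⁅y ^ p ^ m, x ^ p ^ m⁆ ∈ Gs (n + m + 2) := by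
        intro m
        induction m with
        | zero =>
          intro x hx y hy
          simpa using hcomm (Subgroup.commutator_mem_commutator hy hx)
        | succ m ih =>
          intro x hx y hy
          have h1 := cpf_comm_pow_mem hGs (k := n + m) (by omega)
            (cpf_ppow_mem hGs hn hy m) (cpf_ppow_mem hGs hn hx m) (ih x hx y hy)
          rw [pow_succ, pow_mul, pow_mul]
          exact h1
      exact fun m x hx y hy => Or.inr (key m x hx y hy)
  have hmul : ∀ m : ℕ, 1 ≤ m → ∀ x ∈ Gs n, ∀ y ∈ Gs n,
      (x ^ p ^ m * y ^ p ^ m)⁻¹ * (x * y) ^ p ^ m ∈ Gs (n + m + 1) := by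
    intro m hm
    induction m, hm using Nat.le_induction with
    | base =>
      intro x hx y hy
      have hz1 : 2 < p ∨ ⁅y, x⁆ ∈ Gs (n + 2) := by simpa using hzcase 0 x hx y hy
      simpa [pow_one] using cpf_step hp hGs hn hx hy hz1
    | succ m hm ih =>
      intro x hx y hy
      have ha : x ^ p ^ m ∈ Gs (n + m) := cpf_ppow_mem hGs hn hx m
      have hb : y ^ p ^ m ∈ Gs (n + m) := cpf_ppow_mem hGs hn hy m
      have hcm : (x ^ p ^ m * y ^ p ^ m)⁻¹ * (x * y) ^ p ^ m ∈ Gs (n + m + 1) :=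
        ih x hx y hy
      haveI : (Gs (n + m + 2)).Normal := cpf_normal hGs (by omega)
      have hgoal : (x ^ p ^ (m + 1) * y ^ p ^ (m + 1))⁻¹ * (x * y) ^ p ^ (m + 1)
          ∈ Gs (n + m + 2) := by
        rw [← QuotientGroup.eq]
        set c := (x ^ p ^ m * y ^ p ^ m)⁻¹ * (x * y) ^ p ^ m with hc
        have hcen : ∀ q : G ⧸ Gs (n + m + 2), Commute (QuotientGroup.mk c) q := fun q =>
          cpf_central hGs (k := n + m + 1) (by omega) hcm q
        have hcp : (QuotientGroup.mk c : G ⧸ Gs (n + m + 2)) ^ p = 1 := by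
          rw [← QuotientGroup.mk_pow]
          exact (QuotientGroup.eq_one_iff _).mpr
            (cpf_pow_mem hGs (k := n + m + 1) (by omega) hcm)
        have hstep := cpf_step hp hGs (k := n + m) (by omega) ha hb (hzcase m x hx y hy)
        have e1 : (x * y) ^ p ^ (m + 1) = ((x ^ p ^ m * y ^ p ^ m) * c) ^ p := by
          rw [hc, pow_succ, pow_mul]
          group
        have e2 : x ^ p ^ (m + 1) * y ^ p ^ (m + 1)
            = (x ^ p ^ m) ^ p * (y ^ p ^ m) ^ p := by
          rw [pow_succ, pow_mul, pow_mul]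
        rw [e1, e2]
        calc (QuotientGroup.mk ((x ^ p ^ m) ^ p * (y ^ p ^ m) ^ p) : G ⧸ Gs (n + m + 2))
            = QuotientGroup.mk ((x ^ p ^ m * y ^ p ^ m) ^ p) := QuotientGroup.eq.mpr hstep
          _ = QuotientGroup.mk (x ^ p ^ m * y ^ p ^ m) ^ p
              * (QuotientGroup.mk c : G ⧸ Gs (n + m + 2)) ^ p := by
              rw [QuotientGroup.mk_pow, hcp, mul_one]
          _ = (QuotientGroup.mk (x ^ p ^ m * y ^ p ^ m)
              * (QuotientGroup.mk c : G ⧸ Gs (n + m + 2))) ^ p :=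
              ((hcen _).symm.mul_pow p).symm
          _ = QuotientGroup.mk ((x ^ p ^ m * y ^ p ^ m) * c) ^ p := by
              rw [← QuotientGroup.mk_mul]
          _ = QuotientGroup.mk (((x ^ p ^ m * y ^ p ^ m) * c) ^ p) := by
              rw [QuotientGroup.mk_pow]
      exact hgoal
  refine ⟨fun x hx => cpf_ppow_mem hGs hn hx m, hmul m hm, fun x hx => ?_⟩
  have := cpf_ppow_mem hGs (k := n + 1) (by omega) hx m
  rwa [Nat.add_right_comm n 1 m] at this
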